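/- Let W, V be fixed polynomials and let (Θ_n)_{n ≥ 0}, (Ω_n)_{n ≥ 0} be sequences of polynomials and (a_n), (b_n) scalar sequences satisfying Ω_0 = V, Ω_{n+1}(z) = (z - b_n) Θ_n(z) - Ω_n(z) for all n ≥ 0, and (z - b_n)(Ω_{n+1}(z) - Ω_n(z)) = W(z) + a_{n+1}^2 Θ_{n+1}(z) - a_n^2 Θ_{n-1}(z) for all n ≥ 1, together with Ω_1^2 - a_1^2 Θ_1 Θ_0 = V^2 + W Θ_0 (the case n = 1). Then for every n ≥ 1, Ω_n(z)^2 - a_n^2 Θ_n(z) Θ_{n-1}(z) = V(z)^2 + W(z) (Θ_0(z) + Θ_1(z) + ... + Θ_{n-1}(z)). -/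

import Mathlib

open Polynomial

/-- Relations (16) and (19) imply (20):
`Ω_n² - a_n² Θ_n Θ_{n-1} = V² + W (Θ_0 + ⋯ + Θ_{n-1})`. -/
theorem omega_theta_sum_identity (W V : Polynomial ℝ) (Θ Ω : ℕ → Polynomial ℝ)
    (a b : ℕ → ℝ)
    (h0 : Ω 0 = V)
    (h16 : ∀ n, Ω (n + 1) = (X - C (b n)) * Θ n - Ω n)
    (h19 : ∀ n, 1 ≤ n →
      (X - C (b n)) * (Ω (n + 1) - Ω n) =
        W + C ((a (n + 1)) ^ 2) * Θ (n + 1) - C ((a n) ^ 2) * Θ (n - 1))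
    (hbase : (Ω 1) ^ 2 - C ((a 1) ^ 2) * Θ 1 * Θ 0 = V ^ 2 + W * Θ 0) :
    ∀ n, 1 ≤ n →
      (Ω n) ^ 2 - C ((a n) ^ 2) * Θ n * Θ (n - 1) =
        V ^ 2 + W * ∑ i ∈ Finset.range n, Θ i := by
  intro n hn
  induction n, hn using Nat.le_induction with
  | base => simpa using hbase
  | succ n hn ih =>
    have hsum : Ω (n + 1) + Ω n = (X - C (b n)) * Θ n := by
      rw [h16 n]; ring
    have hdiff : (Ω (n+1))^2 - (Ω n)^2
        = Θ n * (W + C ((a (n + 1)) ^ 2) * Θ (n + 1) - C ((a n) ^ 2) * Θ (n - 1)) := by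
      have := h19 n hn
      calc (Ω (n+1))^2 - (Ω n)^2 = (Ω (n+1) + Ω n) * (Ω (n+1) - Ω n) := by ring
        _ = Θ n * ((X - C (b n)) * (Ω (n + 1) - Ω n)) := by rw [hsum]; ring
        _ = _ := by rw [this]
    have hΘ : Θ (n + 1 - 1) = Θ n := by norm_num
    rw [hΘ, Finset.sum_range_succ, mul_add]
    linear_combination ih + hdiff
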